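/- The function f(y) = ½ y² + y l + (y/β) log((1 - e^{-βy})/(1 - e^{-βT})), extended by f(0) = 0, is strictly convex on [0, T] for any l ∈ ℝ, β > 0, T > 0. -/

import Mathlib

open Real Set

/-- The function `f(y) = ½ y² + y l + (y/β) log((1-e^{-βy})/(1-e^{-βT}))`,
extended by `f 0 = 0`, is strictly convex on `[0, T]`. -/
theorem logit_lineplan_objective_strictConvexOn
    (l β T : ℝ) (hβ : 0 < β) (hT : 0 < T) :
    StrictConvexOn ℝ (Set.Icc (0 : ℝ) T)
      (fun y : ℝ => if y = 0 then 0 else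
        (1 / 2) * y ^ 2 + y * l +
          (y / β) * Real.log ((1 - Real.exp (-β * y)) / (1 - Real.exp (-β * T)))) := by
  have hβ0 : β ≠ 0 := ne_of_gt hβ
  set F : ℝ → ℝ := fun y : ℝ => if y = 0 then 0 else
      (1 / 2) * y ^ 2 + y * l +
        (y / β) * Real.log ((1 - Real.exp (-β * y)) / (1 - Real.exp (-β * T))) with hF
  have hpos : ∀ y : ℝ, 0 < y → 0 < 1 - Real.exp (-β * y) := by
    intro y hy
    have h1 : Real.exp (-β * y) < 1 := Real.exp_lt_one_iff.mpr (by nlinarith)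
    linarith
  have hTden : 0 < 1 - Real.exp (-β * T) := hpos T hT
  set c : ℝ := Real.log (1 - Real.exp (-β * T)) with hc
  set g : ℝ → ℝ := fun y =>
      (1 / 2) * y ^ 2 + y * l + (y / β) * (Real.log (1 - Real.exp (-β * y)) - c) with hg
  have hFg : ∀ y ∈ Set.Ioi (0 : ℝ), F y = g y := by
    intro y hy
    simp only [hF, hg, if_neg (ne_of_gt (show (0:ℝ) < y from hy))]
    rw [Real.log_div (ne_of_gt (hpos y hy)) (ne_of_gt hTden)]
  -- first derivative of g on Ioi 0
  set G1 : ℝ → ℝ := fun y => y + l + (1 / β) * (Real.log (1 - Real.exp (-β * y)) - c) +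
      y * Real.exp (-β * y) / (1 - Real.exp (-β * y)) with hG1
  have hexp : ∀ y : ℝ, HasDerivAt (fun y : ℝ => Real.exp (-β * y))
      (Real.exp (-β * y) * (-β * 1)) y := by
    intro y
    exact ((hasDerivAt_id y).const_mul (-β)).exp
  have hden : ∀ y : ℝ, HasDerivAt (fun y : ℝ => 1 - Real.exp (-β * y))
      (-(Real.exp (-β * y) * (-β * 1))) y := by
    intro y
    exact (hexp y).const_sub 1
  have hlog : ∀ y : ℝ, 0 < y → HasDerivAt (fun y : ℝ => Real.log (1 - Real.exp (-β * y)))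
      (-(Real.exp (-β * y) * (-β * 1)) / (1 - Real.exp (-β * y))) y := by
    intro y hy
    exact (hden y).log (ne_of_gt (hpos y hy))
  have hg' : ∀ y : ℝ, 0 < y → HasDerivAt g (G1 y) y := by
    intro y hy
    have h1 : HasDerivAt (fun y : ℝ => (1 / 2) * y ^ 2 + y * l) (y + l) y := by
      have := ((hasDerivAt_pow 2 y).const_mul ((1:ℝ)/2)).add ((hasDerivAt_id y).mul_const l)
      refine this.congr_deriv ?_
      push_cast
      ring
    have h2 : HasDerivAt (fun y : ℝ => (y / β) * (Real.log (1 - Real.exp (-β * y)) - c))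
        ((1 / β) * (Real.log (1 - Real.exp (-β * y)) - c) +
          (y / β) * (-(Real.exp (-β * y) * (-β * 1)) / (1 - Real.exp (-β * y)))) y := by
      exact ((hasDerivAt_id y).div_const β).mul ((hlog y hy).sub_const c)
    have hne := ne_of_gt (hpos y hy)
    have hterm : (y / β) * (-(Real.exp (-β * y) * (-β * 1)) / (1 - Real.exp (-β * y)))
        = y * Real.exp (-β * y) / (1 - Real.exp (-β * y)) := by
      rw [div_mul_div_comm,
        show y * -(Real.exp (-β * y) * (-β * 1)) = β * (y * Real.exp (-β * y)) by ring,
        mul_div_mul_left _ _ hβ0]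
    have := h1.add h2
    refine this.congr_deriv ?_
    rw [hG1, hterm]
    ring
  have hDF1 : Set.EqOn (deriv F) G1 (Set.Ioi (0:ℝ)) := by
    intro y hy
    have hev : F =ᶠ[nhds y] g := Filter.eventuallyEq_of_mem (isOpen_Ioi.mem_nhds hy) hFg
    rw [hev.deriv_eq, (hg' y hy).deriv]
  -- second derivative
  have key2 : ∀ x : ℝ, 0 < x → ∃ d : ℝ, HasDerivAt G1 d x ∧ 0 < d := by
    intro x hx
    have hne := ne_of_gt (hpos x hx)
    have hnum : HasDerivAt (fun y : ℝ => y * Real.exp (-β * y))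
        (1 * Real.exp (-β * x) + x * (Real.exp (-β * x) * (-β * 1))) x :=
      (hasDerivAt_id x).mul (hexp x)
    have h3 : HasDerivAt (fun y : ℝ => y * Real.exp (-β * y) / (1 - Real.exp (-β * y)))
        (((1 * Real.exp (-β * x) + x * (Real.exp (-β * x) * (-β * 1))) *
            (1 - Real.exp (-β * x)) -
          x * Real.exp (-β * x) * -(Real.exp (-β * x) * (-β * 1))) /
            (1 - Real.exp (-β * x)) ^ 2) x :=
      hnum.div (hden x) hne
    have h12 : HasDerivAt (fun y : ℝ => y + l + (1 / β) *
        (Real.log (1 - Real.exp (-β * y)) - c))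
        (1 + (1 / β) * (-(Real.exp (-β * x) * (-β * 1)) / (1 - Real.exp (-β * x)))) x := by
      exact (((hasDerivAt_id x).add_const l)).add (((hlog x hx).sub_const c).const_mul (1/β))
    refine ⟨_, h12.add h3, ?_⟩
    set E : ℝ := Real.exp (-β * x) with hE
    have hE0 : 0 < E := Real.exp_pos _
    have hE1 : E < 1 := by
      have := hpos x hx
      linarith
    have hkey : 0 < 1 - E ^ 2 - β * x * E := by
      have hu : β * x ≠ 0 := by positivity
      have h1 : β * x + 1 < Real.exp (β * x) := Real.add_one_lt_exp hu
      have hexpos : 0 < Real.exp (β * x) := Real.exp_pos _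
      have hEeq : E = (Real.exp (β * x))⁻¹ := by
        rw [hE, show -β * x = -(β * x) by ring, Real.exp_neg]
      rw [hEeq]
      have h2 : 0 < Real.exp (β * x) ^ 2 - 1 - β * x * Real.exp (β * x) := by
        nlinarith [hexpos, h1]
      have h3 : (1 : ℝ) - ((Real.exp (β * x))⁻¹) ^ 2 - β * x * (Real.exp (β * x))⁻¹ =
          (Real.exp (β * x) ^ 2 - 1 - β * x * Real.exp (β * x)) / Real.exp (β * x) ^ 2 := by
        field_simp
      rw [h3]
      positivity
    have h1E : (1:ℝ) - E ≠ 0 := by linarith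
    have heq : (1 + 1 / β * (-(E * (-β * 1)) / (1 - E)) +
        ((1 * E + x * (E * (-β * 1))) * (1 - E) - x * E * -(E * (-β * 1))) / (1 - E) ^ 2)
        = (1 - E ^ 2 - β * x * E) / (1 - E) ^ 2 := by
      field_simp
      ring
    rw [heq]
    positivity
  -- continuity
  have hxlogx : Filter.Tendsto (fun y : ℝ => Real.log y * y)
      (nhdsWithin 0 (Set.Ioi 0)) (nhds 0) := by
    have := tendsto_log_mul_rpow_nhdsGT_zero (r := 1) one_pos
    simpa [Real.rpow_one] using this
  have hcont : ContinuousOn F (Set.Icc 0 T) := by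
    intro x hx
    rcases eq_or_lt_of_le hx.1 with h0 | h0
    · -- x = 0
      subst h0
      have hsub : Set.Icc (0:ℝ) T ⊆ insert (0:ℝ) (Set.Ioi 0) := by
        intro y hy
        rcases eq_or_lt_of_le hy.1 with h | h
        · exact Or.inl h.symm
        · exact Or.inr h
      refine (ContinuousWithinAt.mono ?_ hsub)
      rw [continuousWithinAt_insert_self]
      have hF0 : F 0 = 0 := by simp [hF]
      rw [ContinuousWithinAt, hF0]
      have hmain : Filter.Tendsto (fun y : ℝ => y * Real.log (1 - Real.exp (-β * y)))
          (nhdsWithin 0 (Set.Ioi 0)) (nhds 0) := by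
        have hlow : Filter.Tendsto (fun y : ℝ => y * (Real.log β + Real.log y - β * y))
            (nhdsWithin 0 (Set.Ioi 0)) (nhds 0) := by
          have h1 : Filter.Tendsto (fun y : ℝ => y * Real.log β - β * y * y)
              (nhdsWithin 0 (Set.Ioi 0)) (nhds 0) := by
            have h2 := (Continuous.tendsto
              (show Continuous (fun y : ℝ => y * Real.log β - β * y * y) by fun_prop) 0)
            simp only [zero_mul, mul_zero, sub_zero] at h2
            exact h2.mono_left nhdsWithin_le_nhds
          have := h1.add hxlogx
          simp only [add_zero] at this
          refine this.congr (fun y => by ring)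
        have hhigh : Filter.Tendsto (fun y : ℝ => y * (Real.log β + Real.log y))
            (nhdsWithin 0 (Set.Ioi 0)) (nhds 0) := by
          have h1 : Filter.Tendsto (fun y : ℝ => y * Real.log β)
              (nhdsWithin 0 (Set.Ioi 0)) (nhds 0) := by
            have h2 := (Continuous.tendsto
              (show Continuous (fun y : ℝ => y * Real.log β) by fun_prop) 0)
            simp only [zero_mul] at h2
            exact h2.mono_left nhdsWithin_le_nhds
          have := h1.add hxlogx
          simp only [add_zero] at this
          refine this.congr (fun y => by ring)
        refine tendsto_of_tendsto_of_tendsto_of_le_of_le' hlow hhigh ?_ ?_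
        · -- lower bound
          filter_upwards [self_mem_nhdsWithin] with y hy
          have hy0 : (0:ℝ) < y := hy
          have hby : 0 < β * y := by positivity
          have h1 : β * y + 1 ≤ Real.exp (β * y) := Real.add_one_le_exp _
          have h2 : Real.exp (β * y) * Real.exp (-β * y) = 1 := by
            rw [← Real.exp_add]; simp
          have h4 : 0 ≤ (Real.exp (β * y) - 1 - β * y) * Real.exp (-β * y) :=
            mul_nonneg (by linarith) (Real.exp_pos _).le
          have hlb : β * y * Real.exp (-β * y) ≤ 1 - Real.exp (-β * y) := by nlinarith
          have hposm : 0 < β * y * Real.exp (-β * y) := by positivity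
          have hlogle : Real.log (β * y * Real.exp (-β * y)) ≤
              Real.log (1 - Real.exp (-β * y)) := Real.log_le_log hposm hlb
          have hlogeq : Real.log (β * y * Real.exp (-β * y)) =
              Real.log β + Real.log y - β * y := by
            rw [Real.log_mul (by positivity) (ne_of_gt (Real.exp_pos _)),
              Real.log_mul hβ0 (ne_of_gt hy0), Real.log_exp]
            ring
          have : Real.log β + Real.log y - β * y ≤ Real.log (1 - Real.exp (-β * y)) := by
            rw [← hlogeq]; exact hlogle
          exact mul_le_mul_of_nonneg_left this hy0.le
        · -- upper bound
          filter_upwards [self_mem_nhdsWithin] with y hy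
          have hy0 : (0:ℝ) < y := hy
          have hub : 1 - Real.exp (-β * y) ≤ β * y := by
            have := Real.add_one_le_exp (-β * y)
            linarith
          have hlogle : Real.log (1 - Real.exp (-β * y)) ≤ Real.log (β * y) :=
            Real.log_le_log (hpos y hy0) hub
          have hlogeq : Real.log (β * y) = Real.log β + Real.log y :=
            Real.log_mul hβ0 (ne_of_gt hy0)
          have : Real.log (1 - Real.exp (-β * y)) ≤ Real.log β + Real.log y := by
            rw [← hlogeq]; exact hlogle
          exact mul_le_mul_of_nonneg_left this hy0.le
      -- assemble
      have hpoly : Filter.Tendsto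
          (fun y : ℝ => (1 / 2) * y ^ 2 + y * l - (y / β) * c)
          (nhdsWithin 0 (Set.Ioi 0)) (nhds 0) := by
        have h2 := (Continuous.tendsto
          (show Continuous (fun y : ℝ => (1 / 2) * y ^ 2 + y * l - (y / β) * c) by fun_prop) 0)
        have h3 : (1 / 2) * (0:ℝ) ^ 2 + 0 * l - (0 / β) * c = 0 := by ring
        rw [h3] at h2
        exact h2.mono_left nhdsWithin_le_nhds
      have := hpoly.add (hmain.const_mul (1/β))
      simp only [add_zero, mul_zero] at this
      refine (this.congr' ?_)
      filter_upwards [self_mem_nhdsWithin] with y hy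
      rw [hFg y hy, hg]
      ring
    · -- 0 < x
      have hev : F =ᶠ[nhds x] (fun y : ℝ =>
          (1 / 2) * y ^ 2 + y * l +
            (y / β) * Real.log ((1 - Real.exp (-β * y)) / (1 - Real.exp (-β * T)))) := by
        filter_upwards [isOpen_Ioi.mem_nhds h0] with y hy
        simp [hF, ne_of_gt (show (0:ℝ) < y from hy)]
      have hca : ContinuousAt (fun y : ℝ =>
          (1 / 2) * y ^ 2 + y * l +
            (y / β) * Real.log ((1 - Real.exp (-β * y)) / (1 - Real.exp (-β * T)))) x := by
        have hne : (1 - Real.exp (-β * x)) / (1 - Real.exp (-β * T)) ≠ 0 :=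
          div_ne_zero (ne_of_gt (hpos x h0)) (ne_of_gt hTden)
        have h1 : ContinuousAt (fun y : ℝ =>
            (1 - Real.exp (-β * y)) / (1 - Real.exp (-β * T))) x := by fun_prop
        have h2 : ContinuousAt Real.log
            ((1 - Real.exp (-β * x)) / (1 - Real.exp (-β * T))) :=
          Real.continuousAt_log hne
        have h4 : ContinuousAt (Real.log ∘ fun y : ℝ =>
            (1 - Real.exp (-β * y)) / (1 - Real.exp (-β * T))) x := ContinuousAt.comp (x := x) h2 h1
        have h4' : ContinuousAt (fun y : ℝ =>
            Real.log ((1 - Real.exp (-β * y)) / (1 - Real.exp (-β * T)))) x := h4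
        exact ((show ContinuousAt (fun y : ℝ => (1 / 2) * y ^ 2 + y * l) x by fun_prop).add
          ((continuousAt_id.div_const β).mul h4'))
      exact ((hca.congr hev.symm).continuousWithinAt)
  -- conclude
  refine strictConvexOn_of_deriv2_pos (convex_Icc 0 T) hcont ?_
  intro x hx
  rw [interior_Icc] at hx
  obtain ⟨d, hd, hdpos⟩ := key2 x hx.1
  have hev : deriv F =ᶠ[nhds x] G1 :=
    Filter.eventuallyEq_of_mem (isOpen_Ioi.mem_nhds hx.1) hDF1
  have h2 : deriv (deriv F) x = d := by rw [hev.deriv_eq, hd.deriv]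
  have h3 : deriv^[2] F = deriv (deriv F) := by
    rw [Function.iterate_succ_apply', Function.iterate_one]
  rw [h3, h2]
  exact hdpos
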